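/- arXiv:1704.06298 — 6 statements merged into one kernel-verified Lean document; each statement's English description precedes it below -/
import Mathlib

section
/- For all real α > 0, β₁ > 0, β₂ > 0 and every x₀ ∈ ℝ, the two-dimensional Gaussian integral satisfies ∫_ℝ ∫_ℝ exp(−αx₁² − αx₂² − β₁(x₁ − x₀)² − β₂(x₂ − x₁)²) dx₂ dx₁ = π·D^{-1/2}·exp(−αβ₁(α + 2β₂)x₀²/D), where D = (α + β₁)(α + β₂) + αβ₂. -/
open MeasureTheory Real

lemma gauss_aux (b : ℝ) (hb : 0 < b) (c d : ℝ) :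
    ∫ x : ℝ, Real.exp (-b * x ^ 2 + c * x + d)
      = Real.sqrt (π / b) * Real.exp (c ^ 2 / (4 * b) + d) := by
  have hb' : b ≠ 0 := hb.ne'
  have h : ∀ x : ℝ, -b * x ^ 2 + c * x + d
      = -b * (x - c / (2 * b)) ^ 2 + (c ^ 2 / (4 * b) + d) := by
    intro x; field_simp; ring
  simp_rw [h, Real.exp_add, integral_mul_const]
  rw [integral_sub_right_eq_self (fun x => Real.exp (-b * x ^ 2)) (c / (2 * b))]
  rw [integral_gaussian]

/-- Per-coordinate two-dimensional Gaussian integral underlying Theorem 2: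
`∫_ℝ ∫_ℝ exp(−αx₁² − αx₂² − β₁(x₁−x₀)² − β₂(x₂−x₁)²) dx₂ dx₁
  = π D^{-1/2} exp(−αβ₁(α+2β₂)x₀²/D)` where `D = (α+β₁)(α+β₂) + αβ₂`. -/
theorem two_dim_gaussian_integral (α β₁ β₂ x₀ : ℝ)
    (hα : 0 < α) (hβ₁ : 0 < β₁) (hβ₂ : 0 < β₂)
    (D : ℝ) (hD : D = (α + β₁) * (α + β₂) + α * β₂) :
    (∫ x₁ : ℝ, ∫ x₂ : ℝ,
        Real.exp (-α * x₁ ^ 2 - α * x₂ ^ 2 - β₁ * (x₁ - x₀) ^ 2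
          - β₂ * (x₂ - x₁) ^ 2))
      = π * D ^ (-(1 : ℝ) / 2) *
        Real.exp (-α * β₁ * (α + 2 * β₂) * x₀ ^ 2 / D) := by
  have hab : 0 < α + β₂ := by linarith
  have hDpos : 0 < D := by
    rw [hD]; positivity
  have hD0 : D ≠ 0 := hDpos.ne'
  have hinner : ∀ x₁ : ℝ,
      (∫ x₂ : ℝ, Real.exp (-α * x₁ ^ 2 - α * x₂ ^ 2 - β₁ * (x₁ - x₀) ^ 2
          - β₂ * (x₂ - x₁) ^ 2))
      = Real.sqrt (π / (α + β₂)) *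
        Real.exp ((2 * β₂ * x₁) ^ 2 / (4 * (α + β₂)) +
          (-α * x₁ ^ 2 - β₁ * (x₁ - x₀) ^ 2 - β₂ * x₁ ^ 2)) := by
    intro x₁
    rw [← gauss_aux (α + β₂) hab (2 * β₂ * x₁)
        (-α * x₁ ^ 2 - β₁ * (x₁ - x₀) ^ 2 - β₂ * x₁ ^ 2)]
    congr 1; funext x₂; congr 1; ring
  simp_rw [hinner, integral_const_mul]
  have hexp : ∀ x₁ : ℝ,
      (2 * β₂ * x₁) ^ 2 / (4 * (α + β₂)) +
          (-α * x₁ ^ 2 - β₁ * (x₁ - x₀) ^ 2 - β₂ * x₁ ^ 2)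
      = -(D / (α + β₂)) * x₁ ^ 2 + (2 * β₁ * x₀) * x₁ + (-β₁ * x₀ ^ 2) := by
    intro x₁
    rw [hD]; field_simp; ring
  simp_rw [hexp]
  rw [gauss_aux (D / (α + β₂)) (by positivity) (2 * β₁ * x₀) (-β₁ * x₀ ^ 2)]
  have hsq : Real.sqrt (π / (α + β₂)) * Real.sqrt (π / (D / (α + β₂)))
      = π * D ^ (-(1 : ℝ) / 2) := by
    rw [← Real.sqrt_mul (by positivity)]
    have : π / (α + β₂) * (π / (D / (α + β₂))) = π ^ 2 / D := by
      field_simp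
    rw [this, show (-(1:ℝ)/2) = -(1/2) by norm_num, Real.rpow_neg hDpos.le,
      ← Real.sqrt_eq_rpow, Real.sqrt_div (by positivity : (0:ℝ) ≤ π^2),
      Real.sqrt_sq Real.pi_pos.le, div_eq_mul_inv]
  rw [← mul_assoc, hsq]
  congr 1
  rw [hD]
  congr 1
  field_simp
  ring
end

section
/- For all real α > 0, β₁ > 0, β₂ > 0 and every vector r₀ ∈ ℝ³, the Lebesgue integral over ℝ³ × ℝ³ satisfies ∫_{ℝ³} ∫_{ℝ³} exp(−α‖r₁‖² − α‖r₂‖² − β₁‖r₁ − r₀‖² − β₂‖r₂ − r₁‖²) dr₂ dr₁ = π³·D^{-3/2}·exp(−αβ₁(α + 2β₂)‖r₀‖²/D), where D = (α + β₁)(α + β₂) + αβ₂. -/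
open MeasureTheory Real

local notation "E3" => EuclideanSpace ℝ (Fin 3)

lemma gauss3 (b : ℝ) (hb : 0 < b) (v : E3) :
    ∫ x : E3, rexp (-b * ‖x - v‖ ^ 2) = (π / b) ^ ((3 : ℝ) / 2) := by
  rw [integral_sub_right_eq_self (fun y : E3 => rexp (-b * ‖y‖ ^ 2)) v,
    GaussianFourier.integral_rexp_neg_mul_sq_norm hb]
  norm_num [finrank_euclideanSpace_fin]

/-- The six-dimensional Gaussian integral of Theorem 2:
`∫_{ℝ³} ∫_{ℝ³} exp(−α‖r₁‖² − α‖r₂‖² − β₁‖r₁−r₀‖² − β₂‖r₂−r₁‖²) dr₂ dr₁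
  = π³ D^{-3/2} exp(−αβ₁(α+2β₂)‖r₀‖²/D)` where `D = (α+β₁)(α+β₂) + αβ₂`. -/
theorem six_dim_gaussian_integral (α β₁ β₂ : ℝ)
    (hα : 0 < α) (hβ₁ : 0 < β₁) (hβ₂ : 0 < β₂)
    (r₀ : EuclideanSpace ℝ (Fin 3))
    (D : ℝ) (hD : D = (α + β₁) * (α + β₂) + α * β₂) :
    (∫ r₁ : EuclideanSpace ℝ (Fin 3), ∫ r₂ : EuclideanSpace ℝ (Fin 3),
        Real.exp (-α * ‖r₁‖ ^ 2 - α * ‖r₂‖ ^ 2 - β₁ * ‖r₁ - r₀‖ ^ 2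
          - β₂ * ‖r₂ - r₁‖ ^ 2))
      = π ^ 3 * D ^ (-(3 : ℝ) / 2) *
        Real.exp (-α * β₁ * (α + 2 * β₂) * ‖r₀‖ ^ 2 / D) := by
  have hs : 0 < α + β₂ := by linarith
  set s := α + β₂ with hsdef
  set γ := α * β₂ / s with hγ
  have hγpos : 0 < γ := by positivity
  set a := α + γ + β₁ with ha
  have hapos : 0 < a := by positivity
  have hDpos : 0 < D := by rw [hD]; positivity
  have hsa : s * a = D := by
    rw [hD, ha, hγ, hsdef]; field_simp; ring
  -- inner integral
  have inner_eq : ∀ r₁ : E3,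
      (∫ r₂ : E3, rexp (-α * ‖r₁‖ ^ 2 - α * ‖r₂‖ ^ 2 - β₁ * ‖r₁ - r₀‖ ^ 2
          - β₂ * ‖r₂ - r₁‖ ^ 2))
        = rexp (-(α + γ) * ‖r₁‖ ^ 2 - β₁ * ‖r₁ - r₀‖ ^ 2) * (π / s) ^ ((3 : ℝ) / 2) := by
    intro r₁
    have hexp : ∀ r₂ : E3,
        (-α * ‖r₁‖ ^ 2 - α * ‖r₂‖ ^ 2 - β₁ * ‖r₁ - r₀‖ ^ 2 - β₂ * ‖r₂ - r₁‖ ^ 2)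
          = (-(α + γ) * ‖r₁‖ ^ 2 - β₁ * ‖r₁ - r₀‖ ^ 2)
            + (-s * ‖r₂ - (β₂ / s) • r₁‖ ^ 2) := by
      intro r₂
      have h1 : ‖r₂ - r₁‖ ^ 2 = ‖r₂‖ ^ 2 - 2 * inner ℝ r₂ r₁ + ‖r₁‖ ^ 2 :=
        norm_sub_sq_real r₂ r₁
      have h2 : ‖r₂ - (β₂ / s) • r₁‖ ^ 2
          = ‖r₂‖ ^ 2 - 2 * ((β₂ / s) * inner ℝ r₂ r₁) + (β₂ / s) ^ 2 * ‖r₁‖ ^ 2 := by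
        rw [norm_sub_sq_real, real_inner_smul_right, norm_smul, Real.norm_eq_abs,
          mul_pow, sq_abs]
      rw [h1, h2, hγ]
      field_simp
      ring
    simp_rw [hexp, Real.exp_add, integral_const_mul, gauss3 s hs]
  rw [show (fun r₁ : E3 => ∫ r₂ : E3, rexp (-α * ‖r₁‖ ^ 2 - α * ‖r₂‖ ^ 2
      - β₁ * ‖r₁ - r₀‖ ^ 2 - β₂ * ‖r₂ - r₁‖ ^ 2))
    = fun r₁ : E3 => rexp (-(α + γ) * ‖r₁‖ ^ 2 - β₁ * ‖r₁ - r₀‖ ^ 2) * (π / s) ^ ((3 : ℝ) / 2)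
    from funext inner_eq, integral_mul_const]
  -- outer integral
  have hexp2 : ∀ r₁ : E3,
      (-(α + γ) * ‖r₁‖ ^ 2 - β₁ * ‖r₁ - r₀‖ ^ 2)
        = (-(β₁ * (a - β₁) / a) * ‖r₀‖ ^ 2) + (-a * ‖r₁ - (β₁ / a) • r₀‖ ^ 2) := by
    intro r₁
    have h1 : ‖r₁ - r₀‖ ^ 2 = ‖r₁‖ ^ 2 - 2 * inner ℝ r₁ r₀ + ‖r₀‖ ^ 2 :=
      norm_sub_sq_real r₁ r₀
    have h2 : ‖r₁ - (β₁ / a) • r₀‖ ^ 2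
        = ‖r₁‖ ^ 2 - 2 * ((β₁ / a) * inner ℝ r₁ r₀) + (β₁ / a) ^ 2 * ‖r₀‖ ^ 2 := by
      rw [norm_sub_sq_real, real_inner_smul_right, norm_smul, Real.norm_eq_abs,
        mul_pow, sq_abs]
    rw [h1, h2, ha]
    field_simp
    ring
  simp_rw [hexp2, Real.exp_add, integral_const_mul, gauss3 a hapos]
  -- final algebra
  have hco : β₁ * (a - β₁) / a = α * β₁ * (α + 2 * β₂) / D := by
    rw [← hsa, ha, hγ, hsdef]
    field_simp
    ring
  have hexpo : -(β₁ * (a - β₁) / a) * ‖r₀‖ ^ 2 = -α * β₁ * (α + 2 * β₂) * ‖r₀‖ ^ 2 / D := by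
    rw [hco]; ring
  have hpow : (π / a) ^ ((3 : ℝ) / 2) * (π / s) ^ ((3 : ℝ) / 2)
      = π ^ 3 * D ^ (-(3 : ℝ) / 2) := by
    rw [← Real.mul_rpow (by positivity) (by positivity),
      show π / a * (π / s) = π ^ 2 / D by rw [← hsa]; field_simp,
      Real.div_rpow (by positivity) hDpos.le, neg_div, Real.rpow_neg hDpos.le,
      div_eq_mul_inv]
    congr 1
    rw [← Real.rpow_natCast π 2, ← Real.rpow_mul pi_pos.le, ← Real.rpow_natCast π 3]
    norm_num
  rw [hexpo, mul_assoc, hpow]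
  ring
end

section
/- (Theorem 2: ACF of the time-variant MC channel.) For all V > 0, D₁ > 0, D₂ > 0, τ > 0, times 0 < t₁ < t₂, and every r₀ ∈ ℝ³ with ‖r₀‖ = x₀, the autocorrelation function φ(t₁,t₂) = ∫_{ℝ³}∫_{ℝ³} h(r₁)·h(r₂)·g_{t₁}(r₁ − r₀)·g_{t₂−t₁}(r₂ − r₁) dr₂ dr₁ equals V²·(4π)^{-3}·E^{-3/2}·exp(−x₀²(2a + s₂)/(4E)), where a = D₁τ, s₁ = D₂t₁, s₂ = D₂(t₂ − t₁), and E = a² + 2a s₁ + a s₂ + s₁ s₂. -/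
open MeasureTheory Real

lemma gauss_conv (α β : ℝ) (hα : 0 < α) (hβ : 0 < β) (c : EuclideanSpace ℝ (Fin 3)) :
    ∫ x : EuclideanSpace ℝ (Fin 3), Real.exp (-α * ‖x‖ ^ 2) * Real.exp (-β * ‖x - c‖ ^ 2)
      = ((α + β) / π) ^ (-(3 : ℝ) / 2) * Real.exp (-(α * β / (α + β)) * ‖c‖ ^ 2) := by
  have hαβ : 0 < α + β := by linarith
  have key : ∀ x : EuclideanSpace ℝ (Fin 3),
      Real.exp (-α * ‖x‖ ^ 2) * Real.exp (-β * ‖x - c‖ ^ 2)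
        = Real.exp (-(α + β) * ‖x - (β / (α + β)) • c‖ ^ 2) *
            Real.exp (-(α * β / (α + β)) * ‖c‖ ^ 2) := by
    intro x
    rw [← Real.exp_add, ← Real.exp_add]
    congr 1
    have h1 : ‖x - c‖ ^ 2 = ‖x‖ ^ 2 - 2 * inner ℝ x c + ‖c‖ ^ 2 := norm_sub_sq_real x c
    have h2 : ‖x - (β / (α + β)) • c‖ ^ 2
        = ‖x‖ ^ 2 - 2 * ((β / (α + β)) * inner ℝ x c) + (β / (α + β)) ^ 2 * ‖c‖ ^ 2 := by
      rw [norm_sub_sq_real, real_inner_smul_right, norm_smul]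
      rw [Real.norm_eq_abs, mul_pow, sq_abs]
    rw [h1, h2]
    field_simp
    ring
  simp_rw [key]
  rw [integral_mul_const,
    integral_sub_right_eq_self
      (fun y : EuclideanSpace ℝ (Fin 3) => Real.exp (-(α + β) * ‖y‖ ^ 2)) ((β / (α + β)) • c),
    GaussianFourier.integral_rexp_neg_mul_sq_norm hαβ]
  congr 1
  rw [show ((α + β) / π : ℝ) = (π / (α + β))⁻¹ by rw [inv_div], neg_div,
    Real.rpow_neg (by positivity), ← Real.inv_rpow (by positivity), inv_inv]
  norm_num

lemma core (V a s₁ s₂ E x₀ : ℝ) (hV : 0 < V) (ha : 0 < a) (h1 : 0 < s₁) (h2 : 0 < s₂)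
    (r₀ : EuclideanSpace ℝ (Fin 3)) (hr₀ : ‖r₀‖ = x₀)
    (hE : E = a ^ 2 + 2 * a * s₁ + a * s₂ + s₁ * s₂) :
    (∫ r₁ : EuclideanSpace ℝ (Fin 3), ∫ r₂ : EuclideanSpace ℝ (Fin 3),
        (V * (4 * π * a) ^ (-(3 : ℝ) / 2) * Real.exp (-‖r₁‖ ^ 2 / (4 * a))) *
        (V * (4 * π * a) ^ (-(3 : ℝ) / 2) * Real.exp (-‖r₂‖ ^ 2 / (4 * a))) *
        ((4 * π * s₁) ^ (-(3 : ℝ) / 2) * Real.exp (-‖r₁ - r₀‖ ^ 2 / (4 * s₁))) *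
        ((4 * π * s₂) ^ (-(3 : ℝ) / 2) * Real.exp (-‖r₂ - r₁‖ ^ 2 / (4 * s₂))))
      = V ^ 2 * (4 * π) ^ (-(3 : ℝ)) * E ^ (-(3 : ℝ) / 2) *
          Real.exp (-x₀ ^ 2 * (2 * a + s₂) / (4 * E)) := by
  have hπ : 0 < π := Real.pi_pos
  have hE' : 0 < E := by nlinarith
  have has : 0 < a + s₂ := by linarith
  -- abbreviations
  set A : ℝ := 1 / (4 * a) with hA
  set B : ℝ := 1 / (4 * s₂) with hB
  set β : ℝ := 1 / (4 * s₁) with hβ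
  have hA' : 0 < A := by positivity
  have hB' : 0 < B := by positivity
  have hβ' : 0 < β := by positivity
  set γ : ℝ := A * B / (A + B) with hγ
  have hγ' : 0 < γ := by positivity
  -- inner integral
  have inner_eq : ∀ r₁ : EuclideanSpace ℝ (Fin 3),
      (∫ r₂ : EuclideanSpace ℝ (Fin 3),
        (V * (4 * π * a) ^ (-(3 : ℝ) / 2) * Real.exp (-‖r₁‖ ^ 2 / (4 * a))) *
        (V * (4 * π * a) ^ (-(3 : ℝ) / 2) * Real.exp (-‖r₂‖ ^ 2 / (4 * a))) *
        ((4 * π * s₁) ^ (-(3 : ℝ) / 2) * Real.exp (-‖r₁ - r₀‖ ^ 2 / (4 * s₁))) *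
        ((4 * π * s₂) ^ (-(3 : ℝ) / 2) * Real.exp (-‖r₂ - r₁‖ ^ 2 / (4 * s₂))))
      = (V * (4 * π * a) ^ (-(3 : ℝ) / 2) * Real.exp (-‖r₁‖ ^ 2 / (4 * a))) *
        (V * (4 * π * a) ^ (-(3 : ℝ) / 2)) *
        ((4 * π * s₁) ^ (-(3 : ℝ) / 2) * Real.exp (-‖r₁ - r₀‖ ^ 2 / (4 * s₁))) *
        (4 * π * s₂) ^ (-(3 : ℝ) / 2) *
        (((A + B) / π) ^ (-(3 : ℝ) / 2) * Real.exp (-γ * ‖r₁‖ ^ 2)) := by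
    intro r₁
    have pw : ∀ r₂ : EuclideanSpace ℝ (Fin 3),
        (V * (4 * π * a) ^ (-(3 : ℝ) / 2) * Real.exp (-‖r₁‖ ^ 2 / (4 * a))) *
        (V * (4 * π * a) ^ (-(3 : ℝ) / 2) * Real.exp (-‖r₂‖ ^ 2 / (4 * a))) *
        ((4 * π * s₁) ^ (-(3 : ℝ) / 2) * Real.exp (-‖r₁ - r₀‖ ^ 2 / (4 * s₁))) *
        ((4 * π * s₂) ^ (-(3 : ℝ) / 2) * Real.exp (-‖r₂ - r₁‖ ^ 2 / (4 * s₂)))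
        = ((V * (4 * π * a) ^ (-(3 : ℝ) / 2) * Real.exp (-‖r₁‖ ^ 2 / (4 * a))) *
          (V * (4 * π * a) ^ (-(3 : ℝ) / 2)) *
          ((4 * π * s₁) ^ (-(3 : ℝ) / 2) * Real.exp (-‖r₁ - r₀‖ ^ 2 / (4 * s₁))) *
          (4 * π * s₂) ^ (-(3 : ℝ) / 2)) *
          (Real.exp (-A * ‖r₂‖ ^ 2) * Real.exp (-B * ‖r₂ - r₁‖ ^ 2)) := by
      intro r₂
      rw [show -A * ‖r₂‖ ^ 2 = -‖r₂‖ ^ 2 / (4 * a) by rw [hA]; ring,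
        show -B * ‖r₂ - r₁‖ ^ 2 = -‖r₂ - r₁‖ ^ 2 / (4 * s₂) by rw [hB]; ring]
      ring
    simp only [pw]
    rw [integral_const_mul _ _, gauss_conv A B hA' hB' r₁]
  simp only [inner_eq]
  -- outer integral
  have pw2 : ∀ r₁ : EuclideanSpace ℝ (Fin 3),
      (V * (4 * π * a) ^ (-(3 : ℝ) / 2) * Real.exp (-‖r₁‖ ^ 2 / (4 * a))) *
      (V * (4 * π * a) ^ (-(3 : ℝ) / 2)) *
      ((4 * π * s₁) ^ (-(3 : ℝ) / 2) * Real.exp (-‖r₁ - r₀‖ ^ 2 / (4 * s₁))) *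
      (4 * π * s₂) ^ (-(3 : ℝ) / 2) *
      (((A + B) / π) ^ (-(3 : ℝ) / 2) * Real.exp (-γ * ‖r₁‖ ^ 2))
      = (V * (4 * π * a) ^ (-(3 : ℝ) / 2) * (V * (4 * π * a) ^ (-(3 : ℝ) / 2)) *
          (4 * π * s₁) ^ (-(3 : ℝ) / 2) * (4 * π * s₂) ^ (-(3 : ℝ) / 2) *
          ((A + B) / π) ^ (-(3 : ℝ) / 2)) *
        (Real.exp (-(A + γ) * ‖r₁‖ ^ 2) * Real.exp (-β * ‖r₁ - r₀‖ ^ 2)) := by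
    intro r₁
    rw [show -(A + γ) * ‖r₁‖ ^ 2 = -‖r₁‖ ^ 2 / (4 * a) + -γ * ‖r₁‖ ^ 2 by rw [hA]; ring,
      Real.exp_add,
      show -β * ‖r₁ - r₀‖ ^ 2 = -‖r₁ - r₀‖ ^ 2 / (4 * s₁) by rw [hβ]; ring]
    ring
  simp only [pw2]
  rw [integral_const_mul _ _, gauss_conv (A + γ) β (by positivity) hβ' r₀, hr₀]
  have hcoef : (A + γ) * β / (A + γ + β) = (2 * a + s₂) / (4 * E) := by
    rw [hγ, hA, hB, hβ, hE]
    field_simp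
    ring
  have hbase : (4 * π * a) * (4 * π * a) * (4 * π * s₁) * ((4 * π * s₂) * ((A + B) / π *
      ((A + γ + β) / π))) = (4 * π) ^ 2 * E := by
    rw [hγ, hA, hB, hβ, hE]
    field_simp
    ring
  rw [hcoef, show (-((2 * a + s₂) / (4 * E)) * x₀ ^ 2 : ℝ) = -x₀ ^ 2 * (2 * a + s₂) / (4 * E) by
    ring]
  have comb : ∀ x y : ℝ, 0 ≤ x → 0 ≤ y →
      x ^ (-(3 : ℝ) / 2) * y ^ (-(3 : ℝ) / 2) = (x * y) ^ (-(3 : ℝ) / 2) := fun x y hx hy =>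
    (Real.mul_rpow hx hy).symm
  have hsplit : (4 * π * a) ^ (-(3 : ℝ) / 2) * (4 * π * a) ^ (-(3 : ℝ) / 2) *
        (4 * π * s₁) ^ (-(3 : ℝ) / 2) * ((4 * π * s₂) ^ (-(3 : ℝ) / 2) *
        (((A + B) / π) ^ (-(3 : ℝ) / 2) * ((A + γ + β) / π) ^ (-(3 : ℝ) / 2)))
      = ((4 * π * a) * (4 * π * a) * (4 * π * s₁) * ((4 * π * s₂) * ((A + B) / π *
        ((A + γ + β) / π)))) ^ (-(3 : ℝ) / 2) := by
    rw [comb ((A + B) / π) ((A + γ + β) / π) (by positivity) (by positivity),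
      comb (4 * π * s₂) _ (by positivity) (by positivity),
      comb (4 * π * a) (4 * π * a) (by positivity) (by positivity),
      comb ((4 * π * a) * (4 * π * a)) (4 * π * s₁) (by positivity) (by positivity),
      comb _ _ (by positivity) (by positivity)]
  have hfour : ((4 * π) ^ 2 * E : ℝ) ^ (-(3 : ℝ) / 2)
      = (4 * π) ^ (-(3 : ℝ)) * E ^ (-(3 : ℝ) / 2) := by
    rw [Real.mul_rpow (by positivity) hE'.le, ← Real.rpow_natCast (4 * π) 2,
      ← Real.rpow_mul (by positivity)]
    norm_num
  calc V * (4 * π * a) ^ (-(3:ℝ)/2) * (V * (4 * π * a) ^ (-(3:ℝ)/2)) *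
          (4 * π * s₁) ^ (-(3:ℝ)/2) * (4 * π * s₂) ^ (-(3:ℝ)/2) *
          ((A + B) / π) ^ (-(3:ℝ)/2) *
          (((A + γ + β) / π) ^ (-(3:ℝ)/2) * Real.exp (-x₀ ^ 2 * (2 * a + s₂) / (4 * E)))
      = V ^ 2 * ((4 * π * a) * (4 * π * a) * (4 * π * s₁) * ((4 * π * s₂) * ((A + B) / π *
          ((A + γ + β) / π)))) ^ (-(3:ℝ)/2) * Real.exp (-x₀ ^ 2 * (2 * a + s₂) / (4 * E)) := by
        rw [← hsplit]; ring
    _ = V ^ 2 * (4 * π) ^ (-(3:ℝ)) * E ^ (-(3:ℝ)/2) *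
          Real.exp (-x₀ ^ 2 * (2 * a + s₂) / (4 * E)) := by
        rw [hbase, hfour]; ring


/-- Theorem 2 (ACF of the time-variant MC channel):
`φ(t₁,t₂) = ∫∫ h(r₁) h(r₂) g_{t₁}(r₁−r₀) g_{t₂−t₁}(r₂−r₁) dr₂ dr₁
  = V² (4π)^{-3} E^{-3/2} exp(−x₀²(2a+s₂)/(4E))`,
where `a = D₁τ`, `s₁ = D₂t₁`, `s₂ = D₂(t₂−t₁)`, `E = a² + 2as₁ + as₂ + s₁s₂`,
`h(r) = V(4πD₁τ)^{-3/2} exp(−‖r‖²/(4D₁τ))` and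
`g_s(u) = (4πD₂s)^{-3/2} exp(−‖u‖²/(4D₂s))`. -/
theorem acf_of_time_variant_MC_channel (V D₁ D₂ τ t₁ t₂ x₀ : ℝ)
    (hV : 0 < V) (hD₁ : 0 < D₁) (hD₂ : 0 < D₂) (hτ : 0 < τ)
    (ht₁ : 0 < t₁) (ht₁₂ : t₁ < t₂)
    (r₀ : EuclideanSpace ℝ (Fin 3)) (hr₀ : ‖r₀‖ = x₀)
    (a s₁ s₂ E : ℝ)
    (ha : a = D₁ * τ) (hs₁ : s₁ = D₂ * t₁) (hs₂ : s₂ = D₂ * (t₂ - t₁))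
    (hE : E = a ^ 2 + 2 * a * s₁ + a * s₂ + s₁ * s₂) :
    (∫ r₁ : EuclideanSpace ℝ (Fin 3), ∫ r₂ : EuclideanSpace ℝ (Fin 3),
        (V * (4 * π * D₁ * τ) ^ (-(3 : ℝ) / 2) *
            Real.exp (-‖r₁‖ ^ 2 / (4 * D₁ * τ))) *
        (V * (4 * π * D₁ * τ) ^ (-(3 : ℝ) / 2) *
            Real.exp (-‖r₂‖ ^ 2 / (4 * D₁ * τ))) *
        ((4 * π * D₂ * t₁) ^ (-(3 : ℝ) / 2) *
            Real.exp (-‖r₁ - r₀‖ ^ 2 / (4 * D₂ * t₁))) *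
        ((4 * π * D₂ * (t₂ - t₁)) ^ (-(3 : ℝ) / 2) *
            Real.exp (-‖r₂ - r₁‖ ^ 2 / (4 * D₂ * (t₂ - t₁)))))
      = V ^ 2 * (4 * π) ^ (-(3 : ℝ)) * E ^ (-(3 : ℝ) / 2) *
          Real.exp (-x₀ ^ 2 * (2 * a + s₂) / (4 * E)) := by
  have e1 : 4 * π * D₁ * τ = 4 * π * a := by rw [ha]; ring
  have e2 : 4 * D₁ * τ = 4 * a := by rw [ha]; ring
  have e3 : 4 * π * D₂ * t₁ = 4 * π * s₁ := by rw [hs₁]; ring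
  have e4 : 4 * D₂ * t₁ = 4 * s₁ := by rw [hs₁]; ring
  have e5 : 4 * π * D₂ * (t₂ - t₁) = 4 * π * s₂ := by rw [hs₂]; ring
  have e6 : 4 * D₂ * (t₂ - t₁) = 4 * s₂ := by rw [hs₂]; ring
  simp only [e1, e2, e3, e4, e5, e6]
  exact core V a s₁ s₂ E x₀ hV (by rw [ha]; positivity) (by rw [hs₁]; positivity)
    (by rw [hs₂]; nlinarith) r₀ hr₀ hE
end

section
/- (Corollary 1: equal-time ACF of the time-variant MC channel.) For all V > 0, D₁ > 0, D₂ > 0, τ > 0, t₁ > 0 and every r₀ ∈ ℝ³ with ‖r₀‖ = x₀, the second moment of the channel impulse response satisfies φ(t₁,t₁) = ∫_{ℝ³} [V·(4πD₁τ)^{-3/2}·exp(−‖r‖²/(4D₁τ))]² · (4πD₂t₁)^{-3/2}·exp(−‖r − r₀‖²/(4D₂t₁)) dr = V²·exp(−x₀²/(2(D₁τ + 2D₂t₁))) / [(4πD₁τ)^{3/2}·(4π(D₁τ + 2D₂t₁))^{3/2}]. -/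
open MeasureTheory Real

/-- Corollary 1 (equal-time ACF of the time-variant MC channel):
`φ(t₁,t₁) = ∫_{ℝ³} h(r)² f_{t₁}(r) dr
  = V² exp(−x₀²/(2(D₁τ + 2D₂t₁))) / ((4πD₁τ)^{3/2} (4π(D₁τ + 2D₂t₁))^{3/2})`. -/
theorem equal_time_acf_of_time_variant_MC_channel (V D₁ D₂ τ t₁ x₀ : ℝ)
    (hV : 0 < V) (hD₁ : 0 < D₁) (hD₂ : 0 < D₂) (hτ : 0 < τ) (ht₁ : 0 < t₁)
    (r₀ : EuclideanSpace ℝ (Fin 3)) (hr₀ : ‖r₀‖ = x₀) :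
    (∫ r : EuclideanSpace ℝ (Fin 3),
        (V * (4 * π * D₁ * τ) ^ (-(3 : ℝ) / 2) *
            Real.exp (-‖r‖ ^ 2 / (4 * D₁ * τ))) ^ 2 *
        ((4 * π * D₂ * t₁) ^ (-(3 : ℝ) / 2) *
            Real.exp (-‖r - r₀‖ ^ 2 / (4 * D₂ * t₁))))
      = V ^ 2 * Real.exp (-x₀ ^ 2 / (2 * (D₁ * τ + 2 * D₂ * t₁))) /
          ((4 * π * D₁ * τ) ^ ((3 : ℝ) / 2) *
            (4 * π * (D₁ * τ + 2 * D₂ * t₁)) ^ ((3 : ℝ) / 2)) := by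
  have hπ := Real.pi_pos
  set A := D₁ * τ with hA
  set B := D₂ * t₁ with hB
  have hApos : 0 < A := by positivity
  have hBpos : 0 < B := by positivity
  have hS : 0 < A + 2 * B := by positivity
  -- combined Gaussian parameters
  set s : ℝ := (A + 2 * B) / (4 * A * B) with hs
  have hspos : 0 < s := by positivity
  set k : ℝ := A / (A + 2 * B) with hk
  set m : EuclideanSpace ℝ (Fin 3) := k • r₀ with hm
  set C : ℝ := V ^ 2 * ((4 * π * A) ^ (-(3 : ℝ) / 2)) ^ 2 *
      (4 * π * B) ^ (-(3 : ℝ) / 2) * Real.exp (-x₀ ^ 2 / (2 * (A + 2 * B))) with hC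
  have key : ∀ r : EuclideanSpace ℝ (Fin 3),
      (V * (4 * π * A) ^ (-(3 : ℝ) / 2) * Real.exp (-‖r‖ ^ 2 / (4 * A))) ^ 2 *
        ((4 * π * B) ^ (-(3 : ℝ) / 2) * Real.exp (-‖r - r₀‖ ^ 2 / (4 * B)))
      = C * Real.exp (-s * ‖r - m‖ ^ 2) := by
    intro r
    have h1 : ‖r - r₀‖ ^ 2 = ‖r‖ ^ 2 - 2 * inner ℝ r r₀ + ‖r₀‖ ^ 2 :=
      norm_sub_sq_real r r₀
    have h2 : ‖r - m‖ ^ 2 = ‖r‖ ^ 2 - 2 * (k * inner ℝ r r₀) + k ^ 2 * ‖r₀‖ ^ 2 := by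
      rw [norm_sub_sq_real, hm, norm_smul, real_inner_smul_right]
      simp [mul_pow, Real.norm_eq_abs, sq_abs]
    have hexp : (-‖r‖ ^ 2 / (4 * A)) + (-‖r‖ ^ 2 / (4 * A)) + (-‖r - r₀‖ ^ 2 / (4 * B))
        = (-x₀ ^ 2 / (2 * (A + 2 * B))) + (-s * ‖r - m‖ ^ 2) := by
      rw [h1, h2, ← hr₀, hs, hk]
      field_simp
      ring
    have e : Real.exp (-‖r‖ ^ 2 / (4 * A)) ^ 2 * Real.exp (-‖r - r₀‖ ^ 2 / (4 * B))
        = Real.exp (-x₀ ^ 2 / (2 * (A + 2 * B))) * Real.exp (-s * ‖r - m‖ ^ 2) := by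
      rw [sq, ← Real.exp_add, ← Real.exp_add, ← Real.exp_add, hexp]
    rw [mul_pow, mul_pow, hC]
    linear_combination (V ^ 2 * ((4 * π * A) ^ (-(3:ℝ) / 2)) ^ 2 *
      ((4 * π * B) ^ (-(3:ℝ) / 2))) * e
  rw [show (fun r : EuclideanSpace ℝ (Fin 3) =>
      (V * (4 * π * D₁ * τ) ^ (-(3 : ℝ) / 2) * Real.exp (-‖r‖ ^ 2 / (4 * D₁ * τ))) ^ 2 *
        ((4 * π * D₂ * t₁) ^ (-(3 : ℝ) / 2) * Real.exp (-‖r - r₀‖ ^ 2 / (4 * D₂ * t₁))))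
      = fun r => C * Real.exp (-s * ‖r - m‖ ^ 2) from funext fun r => by
        have := key r
        rw [show 4 * π * D₁ * τ = 4 * π * A by rw [hA]; ring,
          show 4 * D₁ * τ = 4 * A by rw [hA]; ring,
          show 4 * π * D₂ * t₁ = 4 * π * B by rw [hB]; ring,
          show 4 * D₂ * t₁ = 4 * B by rw [hB]; ring]
        exact this]
  rw [integral_const_mul]
  rw [show (fun r : EuclideanSpace ℝ (Fin 3) => Real.exp (-s * ‖r - m‖ ^ 2))
      = fun r => (fun v : EuclideanSpace ℝ (Fin 3) => Real.exp (-s * ‖v‖ ^ 2)) (r - m)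
      from rfl]
  rw [integral_sub_right_eq_self (fun v : EuclideanSpace ℝ (Fin 3) =>
      Real.exp (-s * ‖v‖ ^ 2)) m]
  rw [GaussianFourier.integral_rexp_neg_mul_sq_norm hspos]
  have hrank : (Module.finrank ℝ (EuclideanSpace ℝ (Fin 3)) : ℝ) / 2 = (3 : ℝ) / 2 := by
    simp [finrank_euclideanSpace]
  rw [hrank]
  -- Final algebra with rpow
  have h4πA : (0:ℝ) < 4 * π * A := by positivity
  have h4πB : (0:ℝ) < 4 * π * B := by positivity
  have h4πS : (0:ℝ) < 4 * π * (A + 2 * B) := by positivity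
  have hπs : (0:ℝ) < π / s := by positivity
  have hpow : ((4 * π * A) ^ (-(3 : ℝ) / 2)) ^ 2 * (4 * π * B) ^ (-(3 : ℝ) / 2) *
      (π / s) ^ ((3:ℝ)/2)
      = 1 / ((4 * π * A) ^ ((3 : ℝ) / 2) * (4 * π * (A + 2 * B)) ^ ((3 : ℝ) / 2)) := by
    have e1 : ((4 * π * A) ^ (-(3 : ℝ) / 2)) ^ 2
        = ((4 * π * A) ^ ((3:ℝ)/2) * (4 * π * A) ^ ((3:ℝ)/2))⁻¹ := by
      rw [← Real.rpow_natCast ((4 * π * A) ^ (-(3 : ℝ) / 2)) 2, ← Real.rpow_mul h4πA.le,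
        ← Real.rpow_add h4πA,
        show (-(3:ℝ)/2 * ((2:ℕ):ℝ) : ℝ) = -((3:ℝ)/2 + (3:ℝ)/2) by push_cast; ring,
        Real.rpow_neg h4πA.le]
    have e2 : (4 * π * B) ^ (-(3:ℝ) / 2) = ((4 * π * B) ^ ((3:ℝ)/2))⁻¹ := by
      rw [show (-(3:ℝ)/2) = -((3:ℝ)/2) by norm_num, Real.rpow_neg h4πB.le]
    rw [e1, e2]
    rw [show (π / s) = (4 * π * A) * (4 * π * B) / (4 * π * (A + 2 * B)) by
      rw [hs]; field_simp]
    rw [Real.div_rpow (by positivity) h4πS.le, Real.mul_rpow h4πA.le h4πB.le]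
    have nA := (Real.rpow_pos_of_pos h4πA ((3:ℝ)/2)).ne'
    have nB := (Real.rpow_pos_of_pos h4πB ((3:ℝ)/2)).ne'
    have nS := (Real.rpow_pos_of_pos h4πS ((3:ℝ)/2)).ne'
    field_simp
  rw [mul_comm ((4 * π * D₁ * τ) ^ ((3:ℝ)/2)) ((4 * π * (D₁ * τ + 2 * D₂ * t₁)) ^ ((3:ℝ)/2))] at *
  rw [hC]
  rw [show 4 * π * D₁ * τ = 4 * π * A by rw [hA]; ring,
    show 4 * π * (D₁ * τ + 2 * D₂ * t₁) = 4 * π * (A + 2 * B) by rw [hA, hB]; ring,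
    show 2 * (D₁ * τ + 2 * D₂ * t₁) = 2 * (A + 2 * B) by rw [hA, hB]; ring]
  calc V ^ 2 * ((4 * π * A) ^ (-(3 : ℝ) / 2)) ^ 2 * (4 * π * B) ^ (-(3 : ℝ) / 2) *
        Real.exp (-x₀ ^ 2 / (2 * (A + 2 * B))) * (π / s) ^ ((3:ℝ)/2)
      = V ^ 2 * Real.exp (-x₀ ^ 2 / (2 * (A + 2 * B))) *
        (((4 * π * A) ^ (-(3 : ℝ) / 2)) ^ 2 * (4 * π * B) ^ (-(3 : ℝ) / 2) *
          (π / s) ^ ((3:ℝ)/2)) := by ring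
    _ = V ^ 2 * Real.exp (-x₀ ^ 2 / (2 * (A + 2 * B))) /
        ((4 * π * (A + 2 * B)) ^ ((3 : ℝ) / 2) * (4 * π * A) ^ ((3 : ℝ) / 2)) := by
        rw [hpow]; rw [mul_comm ((4 * π * A) ^ ((3:ℝ)/2)) _]; ring
end

section
/- (Cauchy–Schwarz for the closed-form ACF.) For all V > 0, a > 0, s₁ > 0, s₂ > 0 and x₀ ≥ 0, letting E = a² + 2a s₁ + a s₂ + s₁ s₂, the closed-form autocorrelation values satisfy [V²·(4π)^{-3}·E^{-3/2}·exp(−x₀²(2a + s₂)/(4E))]² ≤ [V²·exp(−x₀²/(2(a + 2s₁)))/((4πa)^{3/2}(4π(a + 2s₁))^{3/2})] · [V²·exp(−x₀²/(2(a + 2s₁ + 2s₂)))/((4πa)^{3/2}(4π(a + 2s₁ + 2s₂))^{3/2})]. Equivalently, with a = D₁τ, s₁ = D₂t₁, s₂ = D₂(t₂ − t₁), one has φ(t₁,t₂)² ≤ φ(t₁,t₁)·φ(t₂,t₂) for 0 < t₁ < t₂, so the normalized ACF ρ(t₁,t₂) = φ(t₁,t₂)/√(φ(t₁,t₁)φ(t₂,t₂))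 is at most 1. -/
open Real

/-- Cauchy–Schwarz for the closed-form ACF: with `E = a² + 2as₁ + as₂ + s₁s₂`
(where `a = D₁τ`, `s₁ = D₂t₁`, `s₂ = D₂(t₂−t₁)`),
`φ(t₁,t₂)² ≤ φ(t₁,t₁)·φ(t₂,t₂)`, i.e.
`(V²(4π)^{-3} E^{-3/2} exp(−x₀²(2a+s₂)/(4E)))²
  ≤ (V² exp(−x₀²/(2(a+2s₁)))/((4πa)^{3/2}(4π(a+2s₁))^{3/2}))
    · (V² exp(−x₀²/(2(a+2s₁+2s₂)))/((4πa)^{3/2}(4π(a+2s₁+2s₂))^{3/2}))`. -/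
theorem acf_cauchy_schwarz (V a s₁ s₂ x₀ : ℝ)
    (hV : 0 < V) (ha : 0 < a) (hs₁ : 0 < s₁) (hs₂ : 0 < s₂) (hx₀ : 0 ≤ x₀)
    (E : ℝ) (hE : E = a ^ 2 + 2 * a * s₁ + a * s₂ + s₁ * s₂) :
    (V ^ 2 * (4 * π) ^ (-(3 : ℝ)) * E ^ (-(3 : ℝ) / 2) *
        Real.exp (-x₀ ^ 2 * (2 * a + s₂) / (4 * E))) ^ 2
      ≤ (V ^ 2 * Real.exp (-x₀ ^ 2 / (2 * (a + 2 * s₁))) /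
            ((4 * π * a) ^ ((3 : ℝ) / 2) *
              (4 * π * (a + 2 * s₁)) ^ ((3 : ℝ) / 2))) *
        (V ^ 2 * Real.exp (-x₀ ^ 2 / (2 * (a + 2 * s₁ + 2 * s₂))) /
            ((4 * π * a) ^ ((3 : ℝ) / 2) *
              (4 * π * (a + 2 * s₁ + 2 * s₂)) ^ ((3 : ℝ) / 2))) := by
  have hπ : (0:ℝ) < π := Real.pi_pos
  set A := a + 2 * s₁ with hA
  set B := a + 2 * s₁ + 2 * s₂ with hB
  have hA0 : 0 < A := by positivity
  have hB0 : 0 < B := by positivity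
  have hE0 : 0 < E := by rw [hE]; positivity
  have hL : (V ^ 2 * (4 * π) ^ (-(3 : ℝ)) * E ^ (-(3 : ℝ) / 2) *
        Real.exp (-x₀ ^ 2 * (2 * a + s₂) / (4 * E))) ^ 2
      = V ^ 4 * Real.exp (-x₀ ^ 2 * (2 * a + s₂) / (2 * E)) /
          ((4 * π) ^ 6 * E ^ 3) := by
    have h1 : ((4 * π) ^ (-(3 : ℝ))) ^ 2 = ((4 * π) ^ 6)⁻¹ := by
      rw [← Real.rpow_natCast ((4 * π) ^ (-(3:ℝ))) 2, ← Real.rpow_mul (by positivity),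
        show (-(3:ℝ)) * ((2:ℕ):ℝ) = -((6:ℕ):ℝ) by norm_num,
        Real.rpow_neg (by positivity), Real.rpow_natCast]
    have h2 : (E ^ (-(3 : ℝ) / 2)) ^ 2 = (E ^ 3)⁻¹ := by
      rw [← Real.rpow_natCast (E ^ (-(3:ℝ)/2)) 2, ← Real.rpow_mul hE0.le,
        show (-(3:ℝ)/2) * ((2:ℕ):ℝ) = -((3:ℕ):ℝ) by norm_num,
        Real.rpow_neg hE0.le, Real.rpow_natCast]
    have h3 : (Real.exp (-x₀ ^ 2 * (2 * a + s₂) / (4 * E))) ^ 2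
        = Real.exp (-x₀ ^ 2 * (2 * a + s₂) / (2 * E)) := by
      rw [← Real.exp_nat_mul]
      congr 1
      field_simp
      ring
    rw [mul_pow, mul_pow, mul_pow, h1, h2, h3]
    ring
  have hmul : ∀ x : ℝ, 0 < x → (4 * π * x) ^ ((3:ℝ)/2) = (4*π)^((3:ℝ)/2) * x ^ ((3:ℝ)/2) := by
    intro x hx
    rw [Real.mul_rpow (by positivity) hx.le]
  have hsq : ((4*π)^((3:ℝ)/2))^2 * ((4*π)^((3:ℝ)/2))^2 = (4*π)^6 := by
    rw [← Real.rpow_natCast ((4*π)^((3:ℝ)/2)) 2, ← Real.rpow_mul (by positivity),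
      ← Real.rpow_add (by positivity),
      show (3:ℝ)/2 * ((2:ℕ):ℝ) + (3:ℝ)/2 * ((2:ℕ):ℝ) = ((6:ℕ):ℝ) by norm_num,
      Real.rpow_natCast]
  have h5 : a ^ ((3:ℝ)/2) * a ^ ((3:ℝ)/2) = a ^ 3 := by
    rw [← Real.rpow_add ha, show (3:ℝ)/2 + 3/2 = ((3:ℕ):ℝ) by norm_num, Real.rpow_natCast]
  have hR : (V ^ 2 * Real.exp (-x₀ ^ 2 / (2 * A)) /
            ((4 * π * a) ^ ((3 : ℝ) / 2) * (4 * π * A) ^ ((3 : ℝ) / 2))) *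
        (V ^ 2 * Real.exp (-x₀ ^ 2 / (2 * B)) /
            ((4 * π * a) ^ ((3 : ℝ) / 2) * (4 * π * B) ^ ((3 : ℝ) / 2)))
      = V ^ 4 * Real.exp (-x₀ ^ 2 / (2 * A) + -x₀ ^ 2 / (2 * B)) /
          ((4 * π) ^ 6 * (a ^ 3 * (A * B) ^ ((3:ℝ)/2))) := by
    have h6 : (A*B) ^ ((3:ℝ)/2) = A ^ ((3:ℝ)/2) * B ^ ((3:ℝ)/2) :=
      Real.mul_rpow hA0.le hB0.le
    rw [hmul a ha, hmul A hA0, hmul B hB0, Real.exp_add, h6, div_mul_div_comm]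
    congr 1
    · ring
    · rw [← hsq, ← h5]; ring
  rw [hL, hR]
  have hexp : Real.exp (-x₀ ^ 2 * (2 * a + s₂) / (2 * E))
      ≤ Real.exp (-x₀ ^ 2 / (2 * A) + -x₀ ^ 2 / (2 * B)) := by
    apply Real.exp_le_exp.mpr
    rw [div_add_div _ _ (by positivity) (by positivity),
      div_le_div_iff₀ (by positivity) (by positivity)]
    have key : (A + B) * E ≤ (2*a + s₂) * (A * B) := by
      rw [hE, hA, hB]
      nlinarith [mul_pos hs₁ hs₂, sq_nonneg (a + s₁), mul_pos ha hs₁]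
    nlinarith [sq_nonneg x₀, mul_nonneg (sq_nonneg x₀) (sub_nonneg.mpr key)]
  have hden : a ^ 3 * (A * B) ^ ((3:ℝ)/2) ≤ E ^ 3 := by
    have h7 : (a^2*(A*B))^((3:ℝ)/2) = a ^ 3 * (A * B) ^ ((3:ℝ)/2) := by
      rw [Real.mul_rpow (by positivity) (by positivity), ← Real.rpow_natCast a 2,
        ← Real.rpow_mul ha.le, show ((2:ℕ):ℝ) * ((3:ℝ)/2) = ((3:ℕ):ℝ) by norm_num,
        Real.rpow_natCast]
    have h8 : (E^2)^((3:ℝ)/2) = E ^ 3 := by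
      rw [← Real.rpow_natCast E 2, ← Real.rpow_mul hE0.le,
        show ((2:ℕ):ℝ) * ((3:ℝ)/2) = ((3:ℕ):ℝ) by norm_num, Real.rpow_natCast]
    rw [← h7, ← h8]
    apply Real.rpow_le_rpow (by positivity) _ (by norm_num)
    have hid : E^2 - a^2*(A*B) = 2*a*s₁*s₂*(a+2*s₁) + s₂^2*(a+s₁)^2 := by
      rw [hE, hA, hB]; ring
    have h9 : (0:ℝ) ≤ 2*a*s₁*s₂*(a+2*s₁) := by positivity
    have h10 : (0:ℝ) ≤ s₂^2*(a+s₁)^2 := by positivity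
    linarith
  gcongr
end

section
/- (Finiteness of the coherence time.) For all D₁ > 0, D₂ > 0, τ > 0, x₀ ≥ 0 and every threshold η ∈ (0,1), the set {t > 0 : ρ(t) < η} is nonempty, where ρ(t) = (4πD₁τ)^{3/4}·(4π(D₁τ + 2D₂t))^{3/4}·(4π(D₁τ + D₂t))^{-3/2}·exp(−x₀²/(4(D₁τ + D₂t)) + x₀²/(4(D₁τ + 2D₂t))); hence the coherence time T_c = inf{t > 0 : ρ(t) < η} is a well-defined finite nonnegative real number. -/
open Real

/-- Finiteness of the coherence time: for every threshold `η ∈ (0,1)`, the set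
`{t > 0 : ρ(t) < η}` is nonempty, where `ρ` is the closed-form normalized ACF at
`t₁ = 0`; hence the coherence time `T_c = inf {t > 0 : ρ(t) < η}` is a
well-defined finite nonnegative real number. -/
theorem coherence_time_finite (D₁ D₂ τ x₀ η : ℝ)
    (hD₁ : 0 < D₁) (hD₂ : 0 < D₂) (hτ : 0 < τ) (hx₀ : 0 ≤ x₀)
    (hη₀ : 0 < η) (hη₁ : η < 1)
    (ρ : ℝ → ℝ)
    (hρ : ∀ t, ρ t = (4 * π * D₁ * τ) ^ ((3 : ℝ) / 4) *
        (4 * π * (D₁ * τ + 2 * D₂ * t)) ^ ((3 : ℝ) / 4) *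
        (4 * π * (D₁ * τ + D₂ * t)) ^ (-(3 : ℝ) / 2) *
        Real.exp (-x₀ ^ 2 / (4 * (D₁ * τ + D₂ * t))
          + x₀ ^ 2 / (4 * (D₁ * τ + 2 * D₂ * t)))) :
    {t : ℝ | 0 < t ∧ ρ t < η}.Nonempty ∧
      0 ≤ sInf {t : ℝ | 0 < t ∧ ρ t < η} := by
  have hπ : 0 < π := Real.pi_pos
  set a : ℝ := D₁ * τ with ha_def
  have ha : 0 < a := mul_pos hD₁ hτ
  set A : ℝ := (4 * π * D₁ * τ) ^ ((3 : ℝ) / 4) with hA_def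
  have hA : 0 < A := Real.rpow_pos_of_pos (by positivity) _
  set C : ℝ := A * 2 ^ ((3 : ℝ) / 4) with hC_def
  have hC : 0 < C := by positivity
  set M : ℝ := (C / η + 1) ^ ((4 : ℝ) / 3) with hM_def
  have hCη : 0 < C / η + 1 := by positivity
  have hM : 0 < M := Real.rpow_pos_of_pos hCη _
  set t : ℝ := M / (4 * π * D₂) + 1 with ht_def
  have ht : 0 < t := by positivity
  have hu : 0 < D₁ * τ + D₂ * t := by positivity
  have hv : 0 < D₁ * τ + 2 * D₂ * t := by positivity
  -- the exponential factor is at most 1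
  have hexp : Real.exp (-x₀ ^ 2 / (4 * (D₁ * τ + D₂ * t))
      + x₀ ^ 2 / (4 * (D₁ * τ + 2 * D₂ * t))) ≤ 1 := by
    rw [Real.exp_le_one_iff]
    have h1 : x₀ ^ 2 / (4 * (D₁ * τ + 2 * D₂ * t)) ≤ x₀ ^ 2 / (4 * (D₁ * τ + D₂ * t)) := by
      apply div_le_div_of_nonneg_left (by positivity) (by positivity)
      nlinarith
    have : -x₀ ^ 2 / (4 * (D₁ * τ + D₂ * t)) = -(x₀ ^ 2 / (4 * (D₁ * τ + D₂ * t))) := by ring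
    rw [this]
    linarith
  -- bound the middle factor
  have hvu : 4 * π * (D₁ * τ + 2 * D₂ * t) ≤ 2 * (4 * π * (D₁ * τ + D₂ * t)) := by
    nlinarith
  set u : ℝ := 4 * π * (D₁ * τ + D₂ * t) with hu_def
  have hu' : 0 < u := by positivity
  have hmid : (4 * π * (D₁ * τ + 2 * D₂ * t)) ^ ((3 : ℝ) / 4)
      ≤ 2 ^ ((3 : ℝ) / 4) * u ^ ((3 : ℝ) / 4) := by
    rw [← Real.mul_rpow (by norm_num) hu'.le]
    exact Real.rpow_le_rpow (by positivity) hvu (by norm_num)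
  have key : ρ t ≤ C * u ^ (-(3 : ℝ) / 4) := by
    rw [hρ t]
    have h1 : (4 * π * D₁ * τ) ^ ((3 : ℝ) / 4) *
        (4 * π * (D₁ * τ + 2 * D₂ * t)) ^ ((3 : ℝ) / 4) *
        (4 * π * (D₁ * τ + D₂ * t)) ^ (-(3 : ℝ) / 2) *
        Real.exp (-x₀ ^ 2 / (4 * (D₁ * τ + D₂ * t))
          + x₀ ^ 2 / (4 * (D₁ * τ + 2 * D₂ * t)))
        ≤ A * (2 ^ ((3 : ℝ) / 4) * u ^ ((3 : ℝ) / 4)) * u ^ (-(3 : ℝ) / 2) * 1 := by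
      have hup : (0 : ℝ) < u ^ (-(3 : ℝ) / 2) := Real.rpow_pos_of_pos hu' _
      gcongr <;> first
        | positivity
        | exact hmid
        | exact hexp
    calc _ ≤ A * (2 ^ ((3 : ℝ) / 4) * u ^ ((3 : ℝ) / 4)) * u ^ (-(3 : ℝ) / 2) * 1 := h1
      _ = C * (u ^ ((3 : ℝ) / 4) * u ^ (-(3 : ℝ) / 2)) := by ring
      _ = C * u ^ (-(3 : ℝ) / 4) := by
          rw [← Real.rpow_add hu']; norm_num
  have hMu : M ≤ u := by
    have : u = 4 * π * a + (M + 4 * π * D₂) := by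
      rw [hu_def, ht_def]
      field_simp
      ring
    nlinarith [mul_pos (mul_pos (by norm_num : (0:ℝ) < 4) hπ) ha,
      mul_pos (mul_pos (by norm_num : (0:ℝ) < 4) hπ) hD₂]
  have hstep : u ^ (-(3 : ℝ) / 4) ≤ M ^ (-(3 : ℝ) / 4) :=
    Real.rpow_le_rpow_of_nonpos hM hMu (by norm_num)
  have hMval : M ^ (-(3 : ℝ) / 4) = (C / η + 1)⁻¹ := by
    rw [hM_def, ← Real.rpow_mul hCη.le]
    norm_num [Real.rpow_neg_one]
  have hfin : C * M ^ (-(3 : ℝ) / 4) < η := by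
    rw [hMval]
    rw [mul_inv_lt_iff₀ hCη]
    have : η * (C / η + 1) = C + η := by field_simp
    rw [this]; linarith
  have hmem : t ∈ {t : ℝ | 0 < t ∧ ρ t < η} := by
    refine ⟨ht, ?_⟩
    calc ρ t ≤ C * u ^ (-(3 : ℝ) / 4) := key
      _ ≤ C * M ^ (-(3 : ℝ) / 4) := by gcongr
      _ < η := hfin
  refine ⟨⟨t, hmem⟩, Real.sInf_nonneg fun x hx => hx.1.le⟩
end
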